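/- Vanishing theorem: the relative anomalous cohomology spaces vanish in positive ghost number, H_rel^r = 0 for all r > 0. -/

import Mathlib

/-- Vanishing theorem: the relative anomalous cohomology spaces
vanish in positive ghost number: every `D_rel`-closed cochain of relative ghost
number `r > 0` is a `D_rel`-coboundary. -/
theorem relative_cohomology_vanishing
    {M : Type*} [NormedAddCommGroup M] [InnerProductSpace ℂ M]
    (Arel : ℤ → Submodule ℂ M)              -- anomalous relative complex
    (Drel Δ Box gh : M →ₗ[ℂ] M)
    -- Δ = 2□ + gh_rel
    (hΔ : ∀ x, Δ x = (2 : ℂ) • Box x + gh x)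
    -- □ is non-negative w.r.t. the positive Kähler inner product
    (hBoxpos : ∀ x : M, 0 ≤ (RCLike.re (inner ℂ (Box x) x : ℂ)))
    -- gh_rel acts as multiplication by r on A_rel^r
    (hgh : ∀ (r : ℤ), ∀ x ∈ Arel r, gh x = (r : ℂ) • x)
    -- every relative class has a harmonic representative
    (hharmrep : ∀ (r : ℤ), ∀ x ∈ Arel r, Drel x = 0 →
      ∃ h ∈ Arel r, Δ h = 0 ∧ ∃ y ∈ Arel (r - 1), x = h + Drel y) :
    ∀ (r : ℤ), 0 < r → ∀ x ∈ Arel r, Drel x = 0 →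
      ∃ y ∈ Arel (r - 1), Drel y = x := by
  intro r hr x hx hDx
  obtain ⟨h, hh, hΔh, y, hy, hxy⟩ := hharmrep r x hx hDx
  -- show h = 0
  have key : (2 : ℂ) • Box h + (r : ℂ) • h = 0 := by
    rw [← hgh r h hh, ← hΔ h, hΔh]
  have hBox : Box h = (-(r : ℂ) / 2) • h := by
    have : (2 : ℂ) • Box h = -((r : ℂ) • h) := eq_neg_of_add_eq_zero_left key
    have h2 : Box h = (2 : ℂ)⁻¹ • (-((r : ℂ) • h)) := by
      rw [← this, smul_smul]; norm_num
    rw [h2, smul_neg, smul_smul, ← neg_smul]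
    congr 1
    ring
  have hpos := hBoxpos h
  rw [hBox] at hpos
  have : (inner ℂ ((-(r : ℂ) / 2) • h) h : ℂ) = (starRingEnd ℂ) (-(r : ℂ) / 2) * inner ℂ h h :=
    inner_smul_left _ _ _
  rw [this] at hpos
  have hinner : (inner ℂ h h : ℂ) = (‖h‖ ^ 2 : ℝ) := by
    rw [inner_self_eq_norm_sq_to_K]; norm_num
  rw [hinner] at hpos
  have hc : (starRingEnd ℂ) (-(r : ℂ) / 2) = -(r : ℂ) / 2 := by
    rw [show (-(r : ℂ) / 2) = ((-(r : ℝ) / 2 : ℝ) : ℂ) by push_cast; ring,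
      Complex.conj_ofReal]
  have hre : ((starRingEnd ℂ) (-(r : ℂ) / 2) * ((‖h‖ ^ 2 : ℝ) : ℂ))
      = (((-(r : ℝ) / 2) * ‖h‖ ^ 2 : ℝ) : ℂ) := by
    rw [hc]
    push_cast
    ring
  rw [hre] at hpos
  have hpos' : (0:ℝ) ≤ -(r : ℝ) / 2 * ‖h‖ ^ 2 := by simpa [← Complex.ofReal_pow] using hpos
  have hrpos : (0 : ℝ) < (r : ℝ) := by exact_mod_cast hr
  have hsq : ‖h‖ ^ 2 = 0 := by nlinarith [sq_nonneg ‖h‖, hpos', hrpos]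
  have hnorm : ‖h‖ = 0 := by
    have := pow_eq_zero_iff (n := 2) (by norm_num) |>.mp hsq
    exact this
  have hzero : h = 0 := norm_eq_zero.mp hnorm
  exact ⟨y, hy, by rw [hxy, hzero, zero_add]⟩
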